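/- Let ψ: ℝ^d → ℝ ∪ {∞} be given by ψ(x) = ψ'(x) if x ∈ x⁰ + Range(P) and ψ(x) = ∞ otherwise, where P is a projection matrix and ψ' is convex. Then for any α > 0 and any x, y ∈ ℝ^d, ‖prox_{αψ}(x) − prox_{αψ}(y)‖² ≤ ‖x − y‖²_P, where ‖z‖²_P = ⟨P z, z⟩. -/

import Mathlib

open scoped RealInnerProductSpace

lemma prox_aux_ineq {d : ℕ} {α : ℝ} (hα : 0 < α)
    {ψ' : EuclideanSpace ℝ (Fin d) → ℝ} (hψ' : ConvexOn ℝ Set.univ ψ')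
    (S : Submodule ℝ (EuclideanSpace ℝ (Fin d)))
    (x0 x px : EuclideanSpace ℝ (Fin d))
    (hpx : px - x0 ∈ S)
    (hmin : ∀ u : EuclideanSpace ℝ (Fin d), u - x0 ∈ S →
      α * ψ' px + ‖px - x‖ ^ 2 / 2 ≤ α * ψ' u + ‖u - x‖ ^ 2 / 2)
    (u : EuclideanSpace ℝ (Fin d)) (hu : u - x0 ∈ S)
    {t : ℝ} (ht0 : 0 < t) (ht1 : t ≤ 1) :
    0 ≤ α * (ψ' u - ψ' px) + ⟪px - x, u - px⟫ + t * ‖u - px‖ ^ 2 / 2 := by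
  set v := px + t • (u - px) with hv
  have hvmem : v - x0 ∈ S := by
    have : v - x0 = (px - x0) + t • ((u - x0) - (px - x0)) := by
      rw [hv]; module
    rw [this]
    exact S.add_mem hpx (S.smul_mem t (S.sub_mem hu hpx))
  have hmin' := hmin v hvmem
  have hconv : ψ' v ≤ (1 - t) * ψ' px + t * ψ' u := by
    have h := hψ'.2 (Set.mem_univ px) (Set.mem_univ u) (sub_nonneg.mpr ht1) ht0.le
      (by ring : (1 - t) + t = 1)
    have hveq : v = (1 - t) • px + t • u := by rw [hv]; module
    rw [hveq]
    simpa using h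
  have hnorm : ‖v - x‖ ^ 2 = ‖px - x‖ ^ 2 + 2 * (t * ⟪px - x, u - px⟫) + t ^ 2 * ‖u - px‖ ^ 2 := by
    have hveq : v - x = (px - x) + t • (u - px) := by rw [hv]; module
    rw [hveq, norm_add_sq_real, real_inner_smul_right, norm_smul, Real.norm_eq_abs,
      mul_pow, sq_abs]
  have hstep : 0 ≤ t * (α * (ψ' u - ψ' px) + ⟪px - x, u - px⟫ + t * ‖u - px‖ ^ 2 / 2) := by
    nlinarith [hmin', hconv, hnorm, hα.le]
  nlinarith [hstep, ht0]

/-- Prox of a convex function whose domain is an affine subspace `x⁰ + Range P`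
(`P` a symmetric projection) is contractive in the `P`-seminorm. -/
theorem prox_contractive_in_P_norm
    {d : ℕ}
    (P : EuclideanSpace ℝ (Fin d) →ₗ[ℝ] EuclideanSpace ℝ (Fin d))
    (hidem : ∀ x, P (P x) = P x)
    (hsym : ∀ x y, ⟪P x, y⟫ = ⟪x, P y⟫)
    (x0 : EuclideanSpace ℝ (Fin d))
    (ψ' : EuclideanSpace ℝ (Fin d) → ℝ)
    (hψ' : ConvexOn ℝ Set.univ ψ')
    (α : ℝ) (hα : 0 < α)
    (x y px py : EuclideanSpace ℝ (Fin d))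
    (hpx_mem : px - x0 ∈ LinearMap.range P)
    (hpy_mem : py - x0 ∈ LinearMap.range P)
    (hpx_min : ∀ u : EuclideanSpace ℝ (Fin d), u - x0 ∈ LinearMap.range P →
      α * ψ' px + ‖px - x‖ ^ 2 / 2 ≤ α * ψ' u + ‖u - x‖ ^ 2 / 2)
    (hpy_min : ∀ u : EuclideanSpace ℝ (Fin d), u - x0 ∈ LinearMap.range P →
      α * ψ' py + ‖py - y‖ ^ 2 / 2 ≤ α * ψ' u + ‖u - y‖ ^ 2 / 2) :
    ‖px - py‖ ^ 2 ≤ ⟪P (x - y), x - y⟫ := by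
  -- Step 1: firm nonexpansiveness-type inequality  ‖px - py‖² ≤ ⟪px - py, x - y⟫
  have h1 := fun t ht0 ht1 => prox_aux_ineq hα hψ' (LinearMap.range P) x0 x px hpx_mem
    hpx_min py hpy_mem (t := t) ht0 ht1
  have h2 := fun t ht0 ht1 => prox_aux_ineq hα hψ' (LinearMap.range P) x0 y py hpy_mem
    hpy_min px hpx_mem (t := t) ht0 ht1
  have hinner : ⟪px - x, py - px⟫ + ⟪py - y, px - py⟫
      = ⟪px - py, x - y⟫ - ‖px - py‖ ^ 2 := by
    rw [← real_inner_self_eq_norm_sq]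
    simp only [inner_sub_left, inner_sub_right]
    ring_nf
    rw [real_inner_comm px x, real_inner_comm py x, real_inner_comm px y,
      real_inner_comm py y, real_inner_comm px py]
    ring
  have hsum : ∀ t : ℝ, 0 < t → t ≤ 1 →
      0 ≤ ⟪px - py, x - y⟫ - ‖px - py‖ ^ 2 + t * ‖px - py‖ ^ 2 := by
    intro t ht0 ht1
    have ha := h1 t ht0 ht1
    have hb := h2 t ht0 ht1
    have hn : ‖py - px‖ = ‖px - py‖ := norm_sub_rev _ _
    rw [hn] at ha
    nlinarith [ha, hb, hinner]
  have key : ‖px - py‖ ^ 2 ≤ ⟪px - py, x - y⟫ := by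
    by_contra hcon
    push_neg at hcon
    set c : ℝ := ⟪px - py, x - y⟫ - ‖px - py‖ ^ 2 with hc
    have hcneg : c < 0 := by rw [hc]; linarith
    have hK : (0:ℝ) < ‖px - py‖ ^ 2 := by
      rcases lt_or_eq_of_le (sq_nonneg ‖px - py‖) with h | h
      · exact h
      · exfalso
        have := hsum 1 one_pos le_rfl
        rw [← h] at this; simp at this; linarith
    set t : ℝ := min 1 (-c / (2 * ‖px - py‖ ^ 2)) with ht
    have hKne : ‖px - py‖ ^ 2 ≠ 0 := hK.ne'
    have ht0 : 0 < t := lt_min one_pos (div_pos (by linarith) (by positivity))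
    have ht1 : t ≤ 1 := min_le_left _ _
    have := hsum t ht0 ht1
    have htle : t * ‖px - py‖ ^ 2 ≤ -c / 2 := by
      calc t * ‖px - py‖ ^ 2 ≤ (-c / (2 * ‖px - py‖ ^ 2)) * ‖px - py‖ ^ 2 :=
            mul_le_mul_of_nonneg_right (min_le_right _ _) hK.le
        _ = -c / 2 := by rw [div_mul_eq_mul_div, mul_comm 2, ← div_div, mul_div_cancel_right₀ _ hKne]
    linarith
  -- Step 2: pass to the P-seminorm
  have hmemPd : px - py ∈ LinearMap.range P := by
    have : px - py = (px - x0) - (py - x0) := by abel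
    rw [this]; exact Submodule.sub_mem _ hpx_mem hpy_mem
  obtain ⟨w, hw⟩ := hmemPd
  have hfix : P (px - py) = px - py := by rw [← hw, hidem]
  have hP2 : ⟪P (x - y), x - y⟫ = ‖P (x - y)‖ ^ 2 := by
    rw [← real_inner_self_eq_norm_sq]
    calc ⟪P (x - y), x - y⟫ = ⟪P (P (x - y)), x - y⟫ := by rw [hidem]
      _ = ⟪P (x - y), P (x - y)⟫ := hsym _ _
  have hCS : ⟪px - py, x - y⟫ ≤ ‖px - py‖ * ‖P (x - y)‖ := by
    have : ⟪px - py, x - y⟫ = ⟪px - py, P (x - y)⟫ := by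
      conv_lhs => rw [← hfix]
      rw [hsym]
    rw [this]
    exact real_inner_le_norm _ _
  rw [hP2]
  nlinarith [key, hCS, norm_nonneg (px - py), norm_nonneg (P (x - y)), sq_nonneg (‖px - py‖ - ‖P (x - y)‖)]
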